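/- If f is an equicontinuous homeomorphism of a compact metric space X, then the set of shadowable points of f equals X^deg, the set of points whose connected component is a singleton. -/

import Mathlib

open Metric Set

/-- Natural iterates of a homeomorphism. -/
def hnpow {X : Type*} [TopologicalSpace X] (f : X ≃ₜ X) : ℕ → X ≃ₜ X
  | 0 => Homeomorph.refl X
  | n+1 => (hnpow f n).trans f

/-- Integer iterates `fⁿ`, `n ∈ ℤ`, of a homeomorphism. -/
def hpow {X : Type*} [TopologicalSpace X] (f : X ≃ₜ X) : ℤ → X ≃ₜ X
  | Int.ofNat n => hnpow f n
  | Int.negSucc n => hnpow f.symm (n+1)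

variable {X : Type*} [MetricSpace X]

/-- `ξ` is a `δ`-pseudo-orbit of `f`. -/
def IsPseudoOrbit (f : X ≃ₜ X) (δ : ℝ) (ξ : ℤ → X) : Prop :=
  ∀ n : ℤ, dist (f (ξ n)) (ξ (n+1)) ≤ δ

/-- `ξ` is `ε`-shadowed by the orbit of `y`. -/
def ShadowedBy (f : X ≃ₜ X) (ε : ℝ) (y : X) (ξ : ℤ → X) : Prop :=
  ∀ n : ℤ, dist (hpow f n y) (ξ n) ≤ ε

/-- `x` is a shadowable point of `f`. -/
def ShadowablePoint (f : X ≃ₜ X) (x : X) : Prop :=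
  ∀ ε > 0, ∃ δ > 0, ∀ ξ : ℤ → X, IsPseudoOrbit f δ ξ → ξ 0 = x →
    ∃ y, ShadowedBy f ε y ξ

/-- `f` has the pseudo-orbit tracing property. -/
def POTP (f : X ≃ₜ X) : Prop :=
  ∀ ε > 0, ∃ δ > 0, ∀ ξ : ℤ → X, IsPseudoOrbit f δ ξ → ∃ y, ShadowedBy f ε y ξ

/-- `x` is a nonwandering point of `f`. -/
def NonWandering (f : X ≃ₜ X) (x : X) : Prop :=
  ∀ U ∈ nhds x, ∃ k : ℕ, 0 < k ∧ ((hpow f (k : ℤ)) '' U ∩ U).Nonempty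

/-- `x` is a chain recurrent point of `f`. -/
def ChainRecurrent (f : X ≃ₜ X) (x : X) : Prop :=
  ∀ ρ > 0, ∃ n : ℕ, 0 < n ∧ ∃ c : ℕ → X, c 0 = x ∧ c n = x ∧
    ∀ i < n, dist (f (c i)) (c (i+1)) ≤ ρ

/-- `f` is distal: `inf_{n∈ℤ} d(fⁿ x, fⁿ y) > 0` for all distinct `x, y`. -/
def Distal (f : X ≃ₜ X) : Prop :=
  ∀ x y : X, x ≠ y → ∃ c > 0, ∀ n : ℤ, c ≤ dist (hpow f n x) (hpow f n y)

/-- `f` is minimal: every full orbit is dense. -/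
def MinimalHomeo (f : X ≃ₜ X) : Prop :=
  ∀ x : X, Dense (Set.range fun n : ℤ => hpow f n x)

/-- `f` is equicontinuous (uniformly, over all integer iterates). -/
def EquicontinuousHomeo (f : X ≃ₜ X) : Prop :=
  ∀ α > 0, ∃ β > 0, ∀ x y : X, dist x y ≤ β → ∀ n : ℤ, dist (hpow f n x) (hpow f n y) ≤ α

section aux
variable {X : Type*} [TopologicalSpace X] (f : X ≃ₜ X)

lemma hpow_zero (x : X) : hpow f 0 x = x := rfl

lemma hpow_one (x : X) : hpow f 1 x = f x := rfl

lemma hpow_succ : ∀ (n : ℤ) (x : X), hpow f (n+1) x = f (hpow f n x) := by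
  intro n x
  match n with
  | Int.ofNat k =>
      have hk : (Int.ofNat k) + 1 = Int.ofNat (k+1) := rfl
      rw [hk]; rfl
  | Int.negSucc 0 =>
      have hk : (Int.negSucc 0) + 1 = (0:ℤ) := rfl
      rw [hk]
      show x = f (hnpow f.symm 1 x)
      simp [hnpow]
  | Int.negSucc (k+1) =>
      have hk : (Int.negSucc (k+1)) + 1 = Int.negSucc k := rfl
      rw [hk]
      show hnpow f.symm (k+1) x = f (hnpow f.symm (k+2) x)
      show hnpow f.symm (k+1) x = f (f.symm (hnpow f.symm (k+1) x))
      simp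

lemma hpow_pred (n : ℤ) (x : X) : hpow f (n-1) x = f.symm (hpow f n x) := by
  have := hpow_succ f (n-1) x
  rw [sub_add_cancel] at this
  rw [this]; simp

lemma hpow_add (m n : ℤ) (x : X) : hpow f (m + n) x = hpow f m (hpow f n x) := by
  induction m using Int.induction_on with
  | zero => rw [zero_add]; rfl
  | succ k ih =>
      have e : (k:ℤ) + 1 + n = ((k:ℤ) + n) + 1 := by ring
      rw [e, hpow_succ, ih, ← hpow_succ]
  | pred k ih =>
      have e : (-(k:ℤ) - 1) + n = (-(k:ℤ) + n) - 1 := by ring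
      rw [e, hpow_pred, ih, ← hpow_pred]

end aux

/-- In a connected set, any two points are joined by `r`-chains. -/
lemma chain_of_preconnected {X : Type*} [MetricSpace X] {C : Set X}
    (hC : IsPreconnected C) {p q : X} (hp : p ∈ C) (hq : q ∈ C) {r : ℝ} (hr : 0 < r) :
    ∃ m, ∃ c : ℕ → X, c 0 = p ∧ c m = q ∧ ∀ i < m, dist (c i) (c (i+1)) ≤ r := by
  set S : Set X := {x | x ∈ C ∧ ∃ m, ∃ c : ℕ → X, c 0 = p ∧ c m = x ∧
      ∀ i < m, dist (c i) (c (i+1)) ≤ r} with hS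
  have hpS : p ∈ S := ⟨hp, 0, fun _ => p, rfl, rfl, by omega⟩
  have extend : ∀ x ∈ S, ∀ y ∈ C, dist x y ≤ r → y ∈ S := by
    rintro x ⟨-, m, c, h0, hm, hs⟩ y hy hxy
    refine ⟨hy, m+1, fun i => if i ≤ m then c i else y, by simp [h0], by simp, ?_⟩
    intro i hi
    rcases Nat.lt_or_ge i m with him | him
    · have h1 : i ≤ m := him.le
      have h2 : i + 1 ≤ m := him
      simp only [h1, h2, if_true]
      exact hs i him
    · have hieq : i = m := by omega
      subst hieq
      have h3 : ¬ (i + 1 ≤ i) := by omega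
      simp only [le_refl, if_true, h3, if_false, hm]
      exact hxy
  have hqS : q ∈ S := by
    by_contra hq'
    obtain ⟨z, hzC, hzU, hzV⟩ := hC (⋃ x ∈ S, ball x r) (⋃ x ∈ C \ S, ball x r)
      (isOpen_biUnion fun _ _ => isOpen_ball) (isOpen_biUnion fun _ _ => isOpen_ball)
      (by
        intro x hx
        by_cases hxS : x ∈ S
        · exact Or.inl (mem_biUnion hxS (mem_ball_self hr))
        · exact Or.inr (mem_biUnion ⟨hx, hxS⟩ (mem_ball_self hr)))
      ⟨p, hp, mem_biUnion hpS (mem_ball_self hr)⟩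
      ⟨q, hq, mem_biUnion ⟨hq, hq'⟩ (mem_ball_self hr)⟩
    obtain ⟨x, hxS, hzx⟩ := mem_iUnion₂.1 hzU
    obtain ⟨t, htCS, hzt⟩ := mem_iUnion₂.1 hzV
    have hzS : z ∈ S := extend x hxS z hzC (by rw [dist_comm]; exact (mem_ball.1 hzx).le)
    exact htCS.2 (extend z hzS t htCS.1 ((mem_ball.1 hzt).le))
  exact hqS.2

/-- A point with singleton connected component has small clopen neighborhoods. -/
lemma exists_clopen_subset {X : Type*} [TopologicalSpace X] [T2Space X] [CompactSpace X]
    {p : X} (hp : connectedComponent p = {p}) {W : Set X} (hW : IsOpen W) (hpW : p ∈ W) :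
    ∃ U : Set X, IsClopen U ∧ p ∈ U ∧ U ⊆ W := by
  have h1 : ⋂ s : { s : Set X // IsClopen s ∧ p ∈ s }, (s : Set X) ⊆ W := by
    rw [← connectedComponent_eq_iInter_isClopen, hp]
    exact singleton_subset_iff.2 hpW
  have hcomp : IsCompact (Wᶜ) := hW.isClosed_compl.isCompact
  have hdisj : Wᶜ ∩ ⋂ s : { s : Set X // IsClopen s ∧ p ∈ s }, (s : Set X) = ∅ := by
    rw [eq_empty_iff_forall_notMem]
    rintro x ⟨hx1, hx2⟩
    exact hx1 (h1 hx2)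
  obtain ⟨t, ht⟩ := hcomp.elim_finite_subfamily_closed _ (fun s => s.2.1.isClosed) hdisj
  refine ⟨⋂ s ∈ t, (s : Set X), isClopen_biInter_finset (fun s _ => s.2.1), ?_, ?_⟩
  · exact mem_iInter₂.2 fun s _ => s.2.2
  · intro x hx
    by_contra hxW
    exact absurd ht (by rw [eq_empty_iff_forall_notMem] at ht ⊢; exact fun H => H x ⟨hxW, hx⟩)

theorem stmt13 [CompactSpace X] (f : X ≃ₜ X) (h : EquicontinuousHomeo f) :
    {x | ShadowablePoint f x} = {p : X | connectedComponent p = {p}} := by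
  ext p
  simp only [mem_setOf_eq]
  constructor
  · -- shadowable → singleton component
    intro hs
    rw [eq_singleton_iff_unique_mem]
    refine ⟨mem_connectedComponent, ?_⟩
    intro q hq
    by_contra hqp
    have hd : 0 < dist p q := dist_pos.2 fun e => hqp e.symm
    set α := dist p q / 3 with hα
    have hαpos : 0 < α := by positivity
    obtain ⟨β, hβ, hβp⟩ := h α hαpos
    have hεpos : 0 < min β α := lt_min hβ hαpos
    obtain ⟨δ, hδ, hshad⟩ := hs (min β α) hεpos
    obtain ⟨r, hr, hrp⟩ := h δ hδ
    obtain ⟨m, c, hc0, hcm, hcs⟩ := chain_of_preconnected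
      isPreconnected_connectedComponent mem_connectedComponent hq hr
    set ξ : ℤ → X := fun n => hpow f n (c (min n.toNat m)) with hξ
    have hξ0 : ξ 0 = p := by
      have e : min (0:ℤ).toNat m = 0 := by omega
      simp only [hξ, e, hpow_zero, hc0]
    have hpo : IsPseudoOrbit f δ ξ := by
      intro n
      have hdist : dist (c (min n.toNat m)) (c (min (n+1).toNat m)) ≤ r := by
        rcases (by omega : min ((n+1).toNat) m = min (n.toNat) m ∨
            (min n.toNat m < m ∧ min ((n+1).toNat) m = min n.toNat m + 1)) with h1 | ⟨h1, h2⟩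
        · rw [h1]; simp [hr.le]
        · rw [h2]; exact hcs _ h1
      simp only [hξ]
      rw [← hpow_succ f n (c (min n.toNat m))]
      exact hrp _ _ hdist (n+1)
    obtain ⟨y, hy⟩ := hshad ξ hpo hξ0
    have hy0 : dist y p ≤ min β α := by
      have := hy 0; rwa [hpow_zero, hξ0] at this
    have hym : dist (hpow f (m:ℤ) y) (hpow f (m:ℤ) q) ≤ β := by
      have hm' := hy (m:ℤ)
      have e1 : min ((m:ℤ)).toNat m = m := by omega
      have e : ξ (m:ℤ) = hpow f (m:ℤ) q := by simp only [hξ, e1, hcm]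
      rw [e] at hm'
      exact hm'.trans (min_le_left _ _)
    have hyq : dist y q ≤ α := by
      have h3 := hβp _ _ hym (-(m:ℤ))
      rw [← hpow_add, ← hpow_add] at h3
      have e2 : -(m:ℤ) + (m:ℤ) = 0 := by ring
      rwa [e2, hpow_zero, hpow_zero] at h3
    have htri : dist p q ≤ dist p y + dist y q := dist_triangle _ _ _
    have h1' : dist p y ≤ α := by
      rw [dist_comm]; exact hy0.trans (min_le_right _ _)
    have hfin : dist p q ≤ α + α := htri.trans (add_le_add h1' hyq)
    rw [hα] at hfin
    linarith
  · -- singleton component → shadowable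
    intro hp ε hε
    obtain ⟨β₂, hβ₂, h2⟩ := h ε hε
    obtain ⟨U, hU, hpU, hUW⟩ := exists_clopen_subset hp isOpen_ball (mem_ball_self hβ₂)
    have hUc : IsCompact U := hU.isClosed.isCompact
    obtain ⟨g, hg, hthick⟩ := hUc.exists_thickening_subset_open hU.isOpen subset_rfl
    have hmem : ∀ a ∈ U, ∀ b : X, dist b a < g → b ∈ U := fun a ha b hb =>
      hthick (mem_thickening_iff.2 ⟨a, ha, hb⟩)
    obtain ⟨β₁, hβ₁, h1⟩ := h (g/2) (by positivity)
    refine ⟨β₁, hβ₁, ?_⟩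
    intro ξ hξ hξ0
    have key : ∀ n : ℤ, hpow f (-n) (ξ n) ∈ U := by
      intro n
      induction n using Int.induction_on with
      | zero => rw [neg_zero, hpow_zero, hξ0]; exact hpU
      | succ k ih =>
          have hd := h1 _ _ (hξ k) (-((k:ℤ)+1))
          have e0 : (-((k:ℤ)+1)) + 1 = -(k:ℤ) := by ring
          rw [← hpow_one f (ξ (k:ℤ)), ← hpow_add, e0] at hd
          refine hmem _ ih _ ?_
          calc dist (hpow f (-((k:ℤ)+1)) (ξ ((k:ℤ)+1))) (hpow f (-(k:ℤ)) (ξ (k:ℤ)))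
              = dist (hpow f (-(k:ℤ)) (ξ (k:ℤ))) (hpow f (-((k:ℤ)+1)) (ξ ((k:ℤ)+1))) :=
                dist_comm _ _
            _ ≤ g/2 := hd
            _ < g := by linarith
      | pred k ih =>
          have hd := h1 _ _ (hξ (-(k:ℤ)-1)) (k:ℤ)
          have e0 : (-(k:ℤ)-1) + 1 = -(k:ℤ) := by ring
          rw [e0, ← hpow_one f (ξ (-(k:ℤ)-1)), ← hpow_add] at hd
          have e1 : -(-(k:ℤ)-1) = (k:ℤ)+1 := by ring
          have e2 : -(-(k:ℤ)) = (k:ℤ) := by ring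
          rw [e1]
          rw [e2] at ih
          exact hmem _ ih _ (lt_of_le_of_lt hd (by linarith))
    refine ⟨p, ?_⟩
    intro n
    have hx : hpow f (-n) (ξ n) ∈ U := key n
    have hxd : dist (hpow f (-n) (ξ n)) p ≤ β₂ := (mem_ball.1 (hUW hx)).le
    have h3 := h2 _ _ hxd n
    rw [← hpow_add] at h3
    have e : n + -n = 0 := by ring
    rw [e, hpow_zero] at h3
    rw [dist_comm]
    exact h3
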